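/- Rodrigues' formula for Vieta–Lucas polynomials: for every natural number m ≥ 1 and every ζ ∈ (−2, 2), VL_m(ζ) = (−1)^m · 2 · (m! / (2m)!) · √(4 − ζ²) · f^{(m)}(ζ), where f : (−2,2) → ℝ is the function f(ζ) = (4 − ζ²)^{m − 1/2} (real power) and f^{(m)} denotes its m-th derivative. -/

import Mathlib

open Real Finset

/-- The Vieta–Lucas polynomials, defined recursively. -/
noncomputable def VL : ℕ → ℝ → ℝ
  | 0, _ => 2
  | 1, ζ => ζ
  | (m + 2), ζ => ζ * VL (m + 1) ζ - VL m ζ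

lemma VL_two_cos : ∀ (m : ℕ) (θ : ℝ), VL m (2 * Real.cos θ) = 2 * Real.cos (m * θ)
  | 0, θ => by simp [VL]
  | 1, θ => by simp [VL]
  | (m + 2), θ => by
      rw [show VL (m+2) (2*Real.cos θ) = (2*Real.cos θ) * VL (m+1) (2*Real.cos θ) - VL m (2*Real.cos θ) from rfl,
        VL_two_cos (m+1), VL_two_cos m]
      push_cast
      have h1 : ((m:ℝ)+2) * θ = ((m:ℝ)+1)*θ + θ := by ring
      have h2 : (m:ℝ) * θ = ((m:ℝ)+1)*θ - θ := by ring
      rw [h1, h2, Real.cos_add, Real.cos_sub]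
      ring

lemma I_pow_two_mul_re (q : ℕ) : (Complex.I ^ (2*q)).re = (-1:ℝ)^q := by
  rw [pow_mul, Complex.I_sq]
  induction q with
  | zero => simp
  | succ n ih => rw [pow_succ, pow_succ]; simp [Complex.mul_re, ih]

lemma I_pow_two_mul_im (q : ℕ) : (Complex.I ^ (2*q)).im = 0 := by
  rw [pow_mul, Complex.I_sq]
  induction q with
  | zero => simp
  | succ n ih => rw [pow_succ]; simp [Complex.mul_im, ih]

lemma I_pow_odd_re (q : ℕ) : (Complex.I ^ (2*q+1)).re = 0 := by
  rw [pow_succ]; simp [Complex.mul_re, I_pow_two_mul_re, I_pow_two_mul_im]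

lemma demoivre_even_sum (n : ℕ) (φ : ℝ) :
    ∑ j ∈ range (n+1), (-1:ℝ)^(n+j) * ((2*n).choose (2*j) : ℝ)
      * Real.sin φ ^ (2*(n-j)) * Real.cos φ ^ (2*j) = Real.cos (2*n*φ) := by
  have h := Complex.cos_add_sin_mul_I_pow (2*n) (φ:ℂ)
  have hre : ((Complex.cos φ + Complex.sin φ * Complex.I) ^ (2*n)).re = Real.cos (2*n*φ) := by
    rw [h]
    have h2 : ((2*n : ℕ) : ℂ) * (φ:ℂ) = ((2*n*φ : ℝ) : ℂ) := by push_cast; ring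
    rw [h2, ← Complex.ofReal_cos, ← Complex.ofReal_sin]
    simp only [Complex.add_re, Complex.mul_re, Complex.ofReal_re, Complex.ofReal_im,
      Complex.I_re, Complex.I_im]
    ring
  rw [← hre, add_pow]
  rw [Complex.re_sum]
  have hsplit := Finset.sum_filter_add_sum_filter_not (range (2*n+1)) (fun t => Even t)
      (fun t => (Complex.cos φ ^ t * (Complex.sin φ * Complex.I) ^ (2*n - t) * ((2*n).choose t : ℂ)).re)
  rw [← hsplit]
  have hodd : ∑ t ∈ (range (2*n+1)).filter (fun t => ¬ Even t),
      (Complex.cos φ ^ t * (Complex.sin φ * Complex.I) ^ (2*n - t) * ((2*n).choose t : ℂ)).re = 0 := by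
    apply Finset.sum_eq_zero
    intro t ht
    simp only [mem_filter, mem_range] at ht
    obtain ⟨htlt, htodd⟩ := ht
    rw [Nat.not_even_iff_odd] at htodd
    obtain ⟨q, hq⟩ := htodd
    have h2 : 2*n - t = 2*(n - q - 1) + 1 := by omega
    rw [mul_pow, h2, ← Complex.ofReal_cos, ← Complex.ofReal_sin]
    rw [show ((Real.cos φ : ℂ))^t * ((Real.sin φ:ℂ)^(2*(n-q-1)+1) * Complex.I^(2*(n-q-1)+1)) * ((2*n).choose t : ℂ)
      = ((Real.cos φ ^ t * Real.sin φ ^ (2*(n-q-1)+1) * ((2*n).choose t : ℝ) : ℝ) : ℂ) * Complex.I^(2*(n-q-1)+1) by push_cast; ring]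
    rw [Complex.re_ofReal_mul, I_pow_odd_re, mul_zero]
  rw [hodd, add_zero]
  refine Finset.sum_nbij' (fun j => 2*j) (fun t => t/2) ?_ ?_ ?_ ?_ ?_
  · intro a ha; simp only [mem_range] at ha; simp only [mem_filter, mem_range]
    exact ⟨by omega, even_two_mul a⟩
  · intro t ht; simp only [mem_filter, mem_range] at ht
    obtain ⟨h1, q, hq⟩ := ht; simp only [mem_range]; omega
  · intro a _; show 2*a/2 = a; omega
  · intro t ht; simp only [mem_filter, mem_range] at ht; obtain ⟨_, q, hq⟩ := ht; show 2*(t/2) = t; omega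
  · intro j hj
    simp only [mem_range] at hj
    beta_reduce
    have h2 : 2*n - 2*j = 2*(n-j) := by omega
    rw [h2, mul_pow, ← Complex.ofReal_cos, ← Complex.ofReal_sin]
    rw [show ((Real.cos φ : ℂ))^(2*j) * ((Real.sin φ:ℂ)^(2*(n-j)) * Complex.I^(2*(n-j))) * ((2*n).choose (2*j) : ℂ)
      = ((Real.cos φ ^ (2*j) * Real.sin φ ^ (2*(n-j)) * ((2*n).choose (2*j) : ℝ) : ℝ) : ℂ) * Complex.I^(2*(n-j)) by push_cast; ring]
    rw [Complex.re_ofReal_mul, I_pow_two_mul_re]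
    have h3 : (-1:ℝ)^(n+j) = (-1:ℝ)^(n-j) := by
      rw [show n + j = (n-j) + 2*j by omega, pow_add, pow_mul]; norm_num
    rw [h3]; ring

noncomputable def pp (m : ℕ) : ℕ → ℝ := fun j => ∏ i ∈ Finset.range j, ((m:ℝ) - 1/2 - i)

lemma pp_succ (m j : ℕ) : pp m (j+1) = pp m j * ((m:ℝ) - 1/2 - j) :=
  Finset.prod_range_succ _ _

lemma pp_eq (m : ℕ) : ∀ k r : ℕ, k + r = m →
    pp m k = ((2*m).factorial : ℝ) * r.factorial / (4^k * m.factorial * (2*r).factorial) := by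
  intro k
  induction k with
  | zero =>
    intro r h
    subst h
    have f1 : ((2*(0+r)).factorial : ℝ) ≠ 0 := Nat.cast_ne_zero.2 (Nat.factorial_ne_zero _)
    have f2 : ((r).factorial : ℝ) ≠ 0 := Nat.cast_ne_zero.2 (Nat.factorial_ne_zero _)
    simp only [pp, Finset.range_zero, Finset.prod_empty, pow_zero, Nat.zero_add, one_mul]
    field_simp
  | succ k ih =>
    intro r h
    have ih' := ih (r+1) (by omega)
    rw [pp_succ, ih']
    have h1 : (2*(r+1)).factorial = (2*r+2) * ((2*r+1) * (2*r).factorial) := by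
      rw [show 2*(r+1) = (2*r+1)+1 by ring, Nat.factorial_succ, Nat.factorial_succ]
    have h2 : (r+1).factorial = (r+1) * r.factorial := Nat.factorial_succ r
    have h3 : ((m:ℝ) - 1/2 - k) = (r:ℝ) + 1/2 := by
      have : (m:ℝ) = (k:ℝ) + 1 + r := by push_cast [← h]; ring
      rw [this]; ring
    rw [h1, h2, h3]
    have f1 : ((2*m).factorial : ℝ) ≠ 0 := Nat.cast_ne_zero.2 (Nat.factorial_ne_zero _)
    have f2 : ((m).factorial : ℝ) ≠ 0 := Nat.cast_ne_zero.2 (Nat.factorial_ne_zero _)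
    have f3 : ((2*r).factorial : ℝ) ≠ 0 := Nat.cast_ne_zero.2 (Nat.factorial_ne_zero _)
    have f4 : (4:ℝ)^k ≠ 0 := by positivity
    have f5 : ((2:ℝ)*r+2) ≠ 0 := by positivity
    have f6 : ((2:ℝ)*r+1) ≠ 0 := by positivity
    push_cast
    rw [pow_succ]
    field_simp
    ring

lemma coeff_eq (m j : ℕ) (hj : j ≤ m) :
    (m.factorial : ℝ)/((2*m).factorial) * (m.choose j) * pp m j * pp m (m-j)
      = ((2*m).choose (2*j) : ℝ) / 4^m := by
  rw [pp_eq m j (m-j) (by omega), pp_eq m (m-j) j (by omega)]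
  rw [Nat.cast_choose ℝ hj, Nat.cast_choose ℝ (by omega : 2*j ≤ 2*m)]
  have e1 : 2*m - 2*j = 2*(m-j) := by omega
  rw [e1]
  have f1 : ((2*m).factorial : ℝ) ≠ 0 := Nat.cast_ne_zero.2 (Nat.factorial_ne_zero _)
  have f2 : ((m).factorial : ℝ) ≠ 0 := Nat.cast_ne_zero.2 (Nat.factorial_ne_zero _)
  have f3 : ((2*j).factorial : ℝ) ≠ 0 := Nat.cast_ne_zero.2 (Nat.factorial_ne_zero _)
  have f4 : ((2*(m-j)).factorial : ℝ) ≠ 0 := Nat.cast_ne_zero.2 (Nat.factorial_ne_zero _)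
  have f5 : ((j).factorial : ℝ) ≠ 0 := Nat.cast_ne_zero.2 (Nat.factorial_ne_zero _)
  have f6 : ((m-j).factorial : ℝ) ≠ 0 := Nat.cast_ne_zero.2 (Nat.factorial_ne_zero _)
  have f7 : (4:ℝ)^j ≠ 0 := by positivity
  have f8 : (4:ℝ)^(m-j) ≠ 0 := by positivity
  have f9 : (4:ℝ)^m ≠ 0 := by positivity
  have e2 : (4:ℝ)^j * 4^(m-j) = 4^m := by rw [← pow_add]; congr 1; omega
  field_simp
  rw [← e2]


noncomputable def term (m l j : ℕ) (x : ℝ) : ℝ :=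
  (l.choose j : ℝ) * (-1)^j * pp m j * pp m (l-j)
    * (2-x) ^ ((m:ℝ) - 1/2 - j) * (2+x) ^ ((m:ℝ) - 1/2 - ((l-j : ℕ) : ℝ))

noncomputable def G (m k : ℕ) (x : ℝ) : ℝ := ∑ j ∈ Finset.range (k+1), term m k j x

noncomputable def uterm (m k j : ℕ) (x : ℝ) : ℝ :=
  (k.choose j : ℝ) * (-1)^(j+1) * pp m (j+1) * pp m (k-j)
    * (2-x) ^ ((m:ℝ) - 1/2 - ((j+1 : ℕ) : ℝ)) * (2+x) ^ ((m:ℝ) - 1/2 - ((k-j : ℕ) : ℝ))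

noncomputable def vterm (m k j : ℕ) (x : ℝ) : ℝ :=
  (k.choose j : ℝ) * (-1)^j * pp m j * pp m (k+1-j)
    * (2-x) ^ ((m:ℝ) - 1/2 - j) * (2+x) ^ ((m:ℝ) - 1/2 - ((k+1-j : ℕ) : ℝ))

lemma term_succ_eq (m k j : ℕ) (x : ℝ) (hj : j ≤ k) :
    term m (k+1) (j+1) x = uterm m k j x + vterm m k (j+1) x := by
  unfold term uterm vterm
  rw [Nat.succ_sub_succ, Nat.choose_succ_succ' ]
  push_cast
  ring

lemma term_zero_eq (m k : ℕ) (x : ℝ) : term m (k+1) 0 x = vterm m k 0 x := by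
  unfold term vterm
  simp

lemma vterm_top (m k : ℕ) (x : ℝ) : vterm m k (k+1) x = 0 := by
  unfold vterm
  rw [Nat.choose_succ_self]
  simp

lemma sum_deriv_eq (m k : ℕ) (x : ℝ) :
    ∑ j ∈ range (k+1), ((k.choose j:ℝ)*(-1)^j*pp m j*pp m (k-j) *
        (-((((m:ℝ)-1/2-j)) * (2-x)^((m:ℝ)-1/2-j-1)) * (2+x)^((m:ℝ)-1/2-((k-j:ℕ):ℝ))
         + (2-x)^((m:ℝ)-1/2-j) * ((((m:ℝ)-1/2-((k-j:ℕ):ℝ))) * (2+x)^((m:ℝ)-1/2-((k-j:ℕ):ℝ)-1))))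
      = G m (k+1) x := by
  have hterm : ∀ j ∈ range (k+1), ((k.choose j:ℝ)*(-1)^j*pp m j*pp m (k-j) *
        (-((((m:ℝ)-1/2-j)) * (2-x)^((m:ℝ)-1/2-j-1)) * (2+x)^((m:ℝ)-1/2-((k-j:ℕ):ℝ))
         + (2-x)^((m:ℝ)-1/2-j) * ((((m:ℝ)-1/2-((k-j:ℕ):ℝ))) * (2+x)^((m:ℝ)-1/2-((k-j:ℕ):ℝ)-1))))
      = uterm m k j x + vterm m k j x := by
    intro j hj
    simp only [mem_range] at hj
    have hjk : j ≤ k := by omega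
    have e2 : k+1-j = (k-j)+1 := by omega
    unfold uterm vterm
    rw [pp_succ, e2, pp_succ]
    push_cast
    ring
  rw [Finset.sum_congr rfl hterm, Finset.sum_add_distrib]
  unfold G
  rw [Finset.sum_range_succ' (fun j => term m (k+1) j x) (k+1)]
  have hsplit : ∀ j ∈ range (k+1), term m (k+1) (j+1) x = uterm m k j x + vterm m k (j+1) x := by
    intro j hj
    simp only [mem_range] at hj
    exact term_succ_eq m k j x (by omega)
  rw [Finset.sum_congr rfl hsplit, Finset.sum_add_distrib, term_zero_eq]
  have h2 : ∑ j ∈ range (k+1), vterm m k (j+1) x + vterm m k 0 x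
      = ∑ i ∈ range (k+1+1), vterm m k i x := (Finset.sum_range_succ' (fun i => vterm m k i x) (k+1)).symm
  have h3 : ∑ i ∈ range (k+1+1), vterm m k i x = ∑ i ∈ range (k+1), vterm m k i x := by
    rw [Finset.sum_range_succ, vterm_top, add_zero]
  linarith [h2, h3]

lemma hasDerivAt_G (m k : ℕ) {x : ℝ} (hx : x ∈ Set.Ioo (-2:ℝ) 2) :
    HasDerivAt (G m k) (G m (k+1) x) x := by
  obtain ⟨hx1, hx2⟩ := hx
  have h1 : (0:ℝ) < 2 - x := by linarith
  have h2 : (0:ℝ) < 2 + x := by linarith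
  have hA : ∀ b : ℝ, HasDerivAt (fun y : ℝ => (2-y) ^ b) (-(b * (2-x) ^ (b-1))) x := by
    intro b
    have hd := Real.hasDerivAt_rpow_const (x := 2 - x) (p := b) (Or.inl h1.ne')
    have hu : HasDerivAt (fun y : ℝ => 2 - y) (-1) x := (hasDerivAt_id x).const_sub 2
    have h3 := hd.comp x hu
    simpa [Function.comp_def] using h3
  have hB : ∀ b : ℝ, HasDerivAt (fun y : ℝ => (2+y) ^ b) (b * (2+x) ^ (b-1)) x := by
    intro b
    have hd := Real.hasDerivAt_rpow_const (x := 2 + x) (p := b) (Or.inl h2.ne')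
    have hu : HasDerivAt (fun y : ℝ => 2 + y) 1 x := (hasDerivAt_id x).const_add 2
    have h3 := hd.comp x hu
    simpa [Function.comp_def] using h3
  have hterm : ∀ j ∈ range (k+1), HasDerivAt (fun y => term m k j y)
      ((k.choose j:ℝ)*(-1)^j*pp m j*pp m (k-j) *
        (-((((m:ℝ)-1/2-j)) * (2-x)^((m:ℝ)-1/2-j-1)) * (2+x)^((m:ℝ)-1/2-((k-j:ℕ):ℝ))
         + (2-x)^((m:ℝ)-1/2-j) * ((((m:ℝ)-1/2-((k-j:ℕ):ℝ))) * (2+x)^((m:ℝ)-1/2-((k-j:ℕ):ℝ)-1)))) x := by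
    intro j hj
    have heq : (fun y => term m k j y) = fun y =>
        (k.choose j:ℝ)*(-1)^j*pp m j*pp m (k-j)
          * ((2-y)^((m:ℝ)-1/2-j) * (2+y)^((m:ℝ)-1/2-((k-j:ℕ):ℝ))) := by
      funext y; unfold term; ring
    rw [heq]
    exact ((hA _).mul (hB _)).const_mul _
  have hsum := HasDerivAt.fun_sum hterm
  have hG : G m k = fun y => ∑ j ∈ range (k+1), term m k j y := by
    funext y; rfl
  rw [hG]
  convert hsum using 1
  · rfl
  · rfl
  exact (sum_deriv_eq m k x).symm

lemma iteratedDeriv_f (m : ℕ) (f : ℝ → ℝ)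
    (hf : ∀ ζ : ℝ, f ζ = (4 - ζ ^ 2) ^ ((m : ℝ) - 1 / 2)) :
    ∀ k, ∀ x ∈ Set.Ioo (-2:ℝ) 2, iteratedDeriv k f x = G m k x := by
  intro k
  induction k with
  | zero =>
    intro x hx
    obtain ⟨hx1, hx2⟩ := hx
    have h1 : (0:ℝ) ≤ 2 - x := by linarith
    have h2 : (0:ℝ) ≤ 2 + x := by linarith
    rw [iteratedDeriv_zero, hf]
    unfold G
    rw [Finset.sum_range_one]
    unfold term
    simp only [Nat.choose_self, Nat.cast_one, pow_zero, Nat.sub_self, Nat.cast_zero, pp,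
      Finset.range_zero, Finset.prod_empty, one_mul, mul_one, sub_zero]
    rw [show (4 - x^2 : ℝ) = (2-x)*(2+x) by ring, Real.mul_rpow h1 h2]
  | succ k ih =>
    intro x hx
    rw [iteratedDeriv_succ]
    have hev : iteratedDeriv k f =ᶠ[nhds x] G m k :=
      Filter.eventuallyEq_of_mem (isOpen_Ioo.mem_nhds hx) ih
    rw [hev.deriv_eq]
    exact (hasDerivAt_G m k hx).deriv
theorem vieta_lucas_rodrigues (m : ℕ) (hm : 1 ≤ m)
    (f : ℝ → ℝ) (hf : ∀ ζ : ℝ, f ζ = (4 - ζ ^ 2) ^ ((m : ℝ) - 1 / 2)) :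
    ∀ ζ ∈ Set.Ioo (-2 : ℝ) 2,
      VL m ζ = (-1 : ℝ) ^ m * 2 * ((Nat.factorial m : ℝ) / (Nat.factorial (2 * m) : ℝ)) *
        Real.sqrt (4 - ζ ^ 2) * iteratedDeriv m f ζ := by
  intro ζ hζ
  obtain ⟨hζ1, hζ2⟩ := hζ
  have h1 : (0:ℝ) < 2 - ζ := by linarith
  have h2 : (0:ℝ) < 2 + ζ := by linarith
  rw [iteratedDeriv_f m f hf m ζ ⟨hζ1, hζ2⟩]
  set φ := Real.arccos (ζ/2) / 2 with hφ
  have hcos : Real.cos (2*φ) = ζ/2 := by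
    rw [hφ, show 2*(Real.arccos (ζ/2)/2) = Real.arccos (ζ/2) by ring]
    exact Real.cos_arccos (by linarith) (by linarith)
  have hpyth := Real.sin_sq_add_cos_sq φ
  have ht := Real.cos_two_mul' φ
  rw [hcos] at ht
  have hsin : 4 * Real.sin φ ^ 2 = 2 - ζ := by linarith
  have hcsq : 4 * Real.cos φ ^ 2 = 2 + ζ := by linarith
  have hVL : VL m ζ = 2 * Real.cos (2*(m:ℝ)*φ) := by
    rw [show ζ = 2 * Real.cos (2*φ) by rw [hcos]; ring, VL_two_cos,
      show (m:ℝ)*(2*φ) = 2*(m:ℝ)*φ by ring]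
  rw [hVL, ← demoivre_even_sum m φ]
  unfold G
  rw [Finset.mul_sum, Finset.mul_sum]
  apply Finset.sum_congr rfl
  intro j hj
  simp only [mem_range] at hj
  have hj' : j ≤ m := by omega
  have esqrt : Real.sqrt (4-ζ^2) = (2-ζ)^((1:ℝ)/2) * (2+ζ)^((1:ℝ)/2) := by
    rw [show (4-ζ^2:ℝ) = (2-ζ)*(2+ζ) by ring, Real.sqrt_mul h1.le,
      Real.sqrt_eq_rpow, Real.sqrt_eq_rpow]
  have eA : (2-ζ)^((1:ℝ)/2) * (2-ζ)^((m:ℝ)-1/2-(j:ℝ)) = (2-ζ)^((m-j:ℕ)) := by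
    rw [← Real.rpow_add h1, ← Real.rpow_natCast (2-ζ) (m-j)]
    congr 1
    rw [Nat.cast_sub hj']
    ring
  have eB : (2+ζ)^((1:ℝ)/2) * (2+ζ)^((m:ℝ)-1/2-((m-j:ℕ):ℝ)) = (2+ζ)^(j:ℕ) := by
    rw [← Real.rpow_add h2, ← Real.rpow_natCast (2+ζ) j]
    congr 1
    rw [Nat.cast_sub hj']
    ring
  have hs' : (2-ζ)^((m-j:ℕ)) = 4^(m-j) * Real.sin φ^(2*(m-j)) := by
    rw [← hsin, mul_pow, ← pow_mul]
  have hc' : (2+ζ)^(j:ℕ) = 4^j * Real.cos φ^(2*j) := by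
    rw [← hcsq, mul_pow, ← pow_mul]
  have hco := coeff_eq m j hj'
  have hP : ((-1:ℝ)^m * 2 * ((Nat.factorial m:ℝ)/((Nat.factorial (2*m)):ℝ)) * Real.sqrt (4-ζ^2)) * term m m j ζ
      = (-1:ℝ)^m * 2 * (((Nat.factorial m:ℝ)/((Nat.factorial (2*m)):ℝ)) * (m.choose j) * pp m j * pp m (m-j)) * (-1)^j *
        (((2-ζ)^((1:ℝ)/2) * (2-ζ)^((m:ℝ)-1/2-(j:ℝ))) * ((2+ζ)^((1:ℝ)/2) * (2+ζ)^((m:ℝ)-1/2-((m-j:ℕ):ℝ)))) := by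
    rw [esqrt]; unfold term; ring
  rw [hP, eA, eB, hs', hc', hco]
  have h4 : (4:ℝ)^(m-j) * 4^j = 4^m := by rw [← pow_add]; congr 1; omega
  have h4m : (4:ℝ)^m ≠ 0 := by positivity
  field_simp
  linear_combination ((((2*m).choose (2*j):ℝ)) * Real.sin φ^((m-j)*2) * Real.cos φ^(j*2) * (-1:ℝ)^m * (-1)^j * (-1)) * h4
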